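/- arXiv:0909.0170 — 2 statements merged into one kernel-verified Lean document; each statement's English description precedes it below -/
import Mathlib

section
/- For the standard normal distribution, as x → ∞, h(x)ᵀ Γ_{F(x)}^{-1} h(x) · (1 - F(x)) → 2; that is, h(x)ᵀ Γ_{F(x)}^{-1} h(x) ~ 2(1-F(x))^{-1}. -/
open MeasureTheory Matrix Filter

noncomputable def nqf_f (x : ℝ) : ℝ := Real.exp (-x ^ 2 / 2) / Real.sqrt (2 * Real.pi)

lemma nqf_f_pos (x : ℝ) : 0 < nqf_f x := by unfold nqf_f; positivity
lemma nqf_f_cont : Continuous nqf_f := by unfold nqf_f; fun_prop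

lemma nqf_f_integrable : Integrable nqf_f := by
  have h : nqf_f = fun x => Real.exp (-(1/2) * x ^ 2) * (Real.sqrt (2 * Real.pi))⁻¹ := by
    funext x; unfold nqf_f; rw [div_eq_mul_inv]; ring_nf
  rw [h]
  exact (integrable_exp_neg_mul_sq (by norm_num)).mul_const _

lemma nqf_f_hasDeriv (x : ℝ) : HasDerivAt nqf_f (-x * nqf_f x) x := by
  unfold nqf_f
  have h1 : HasDerivAt (fun x : ℝ => -x ^ 2 / 2) (-x) x := by
    have := ((hasDerivAt_pow 2 x).neg).div_const 2
    refine this.congr_deriv ?_; push_cast; ring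
  have h2 := (h1.exp).div_const (Real.sqrt (2 * Real.pi))
  refine h2.congr_deriv ?_
  ring

lemma nqf_f_tendsto : Tendsto nqf_f atTop (nhds 0) := by
  unfold nqf_f
  rw [show (0:ℝ) = 0 / Real.sqrt (2*Real.pi) by simp]
  apply Tendsto.div_const
  apply Real.tendsto_exp_atBot.comp
  have : Tendsto (fun x : ℝ => x ^ 2 / 2) atTop atTop :=
    (tendsto_pow_atTop (by norm_num)).atTop_div_const (by norm_num)
  have h3 := tendsto_neg_atTop_atBot.comp this
  simpa [neg_div, Function.comp_def] using h3

lemma nqf_inv_tendsto : Tendsto (fun y : ℝ => y⁻¹) atTop (nhds 0) :=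
  tendsto_inv_atTop_zero

lemma nqf_g3_tendsto : Tendsto (fun y : ℝ => (y^4 - y^2 + 3)/y^5) atTop (nhds 0) := by
  have heq : ∀ᶠ y : ℝ in atTop, y⁻¹ - (y⁻¹)^3 + 3*(y⁻¹)^5 = (y^4 - y^2 + 3)/y^5 := by
    filter_upwards [eventually_gt_atTop 0] with y hy
    field_simp
  apply Tendsto.congr' heq
  have h := nqf_inv_tendsto
  have := (h.sub (h.pow 3)).add ((h.pow 5).const_mul 3)
  simpa using this

lemma nqf_g4_tendsto : Tendsto (fun y : ℝ => (y^6 - y^4 + 3*y^2 - 15)/y^7) atTop (nhds 0) := by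
  have heq : ∀ᶠ y : ℝ in atTop,
      y⁻¹ - (y⁻¹)^3 + 3*(y⁻¹)^5 - 15*(y⁻¹)^7 = (y^6 - y^4 + 3*y^2 - 15)/y^7 := by
    filter_upwards [eventually_gt_atTop 0] with y hy
    field_simp
  apply Tendsto.congr' heq
  have h := nqf_inv_tendsto
  have := ((h.sub (h.pow 3)).add ((h.pow 5).const_mul 3)).sub ((h.pow 7).const_mul 15)
  simpa using this

lemma nqf_integrableOn_aux (x : ℝ) (hx : 0 < x) (c k : ℝ) (n : ℕ) (hn : 0 < n) :
    IntegrableOn (fun y => nqf_f y * (c + k/y^n)) (Set.Ioi x) := by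
  apply Integrable.mono' ((nqf_f_integrable.restrict).mul_const (|c| + |k|/x^n))
  · apply ContinuousOn.aestronglyMeasurable _ measurableSet_Ioi
    apply nqf_f_cont.continuousOn.mul
    apply ContinuousOn.add continuousOn_const
    apply ContinuousOn.div continuousOn_const (continuousOn_pow n)
    intro y hy
    exact pow_ne_zero _ (ne_of_gt (lt_trans hx hy))
  · rw [ae_restrict_iff' measurableSet_Ioi]
    filter_upwards with y hy
    have hy0 : 0 < y := lt_trans hx hy
    rw [norm_mul, Real.norm_of_nonneg (le_of_lt (nqf_f_pos y))]
    apply mul_le_mul_of_nonneg_left _ (le_of_lt (nqf_f_pos y))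
    calc ‖c + k/y^n‖ ≤ |c| + |k/y^n| := norm_add_le _ _
      _ ≤ |c| + |k|/x^n := by
          rw [abs_div, abs_pow, abs_of_pos hy0]
          gcongr
          exact hy.le

lemma nqf_upper_int (x : ℝ) (hx : 0 < x) :
    ∫ y in Set.Ioi x, nqf_f y * (1 + 15/y^6) = nqf_f x * ((x^4 - x^2 + 3)/x^5) := by
  have hderiv : ∀ y ∈ Set.Ici x, HasDerivAt (fun y => -(nqf_f y * ((y^4 - y^2 + 3)/y^5)))
      (nqf_f y * (1 + 15/y^6)) y := by
    intro y hy
    have hy0 : 0 < y := lt_of_lt_of_le hx hy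
    have hnum : HasDerivAt (fun y : ℝ => y^4 - y^2 + 3) (4*y^3 - 2*y) y := by
      have := ((hasDerivAt_pow 4 y).sub (hasDerivAt_pow 2 y)).add_const 3
      refine this.congr_deriv ?_; push_cast; ring
    have hden : HasDerivAt (fun y : ℝ => y^5) (5*y^4) y := by
      have := hasDerivAt_pow 5 y
      exact this.congr_deriv (by norm_num)
    have hg := hnum.div hden (pow_ne_zero _ (ne_of_gt hy0))
    have hA := ((nqf_f_hasDeriv y).mul hg).neg
    refine hA.congr_deriv ?_
    simp only [Pi.div_apply]
    field_simp
    ring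
  have htend : Tendsto (fun y => -(nqf_f y * ((y^4 - y^2 + 3)/y^5))) atTop (nhds 0) := by
    have := ((nqf_f_tendsto.mul nqf_g3_tendsto).neg)
    simpa using this
  have key := integral_Ioi_of_hasDerivAt_of_tendsto' hderiv
    (nqf_integrableOn_aux x hx 1 15 6 (by norm_num)) htend
  rw [key]; ring

lemma nqf_lower_int (x : ℝ) (hx : 0 < x) :
    ∫ y in Set.Ioi x, nqf_f y * (1 - 105/y^8) =
      nqf_f x * ((x^6 - x^4 + 3*x^2 - 15)/x^7) := by
  have hderiv : ∀ y ∈ Set.Ici x,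
      HasDerivAt (fun y => -(nqf_f y * ((y^6 - y^4 + 3*y^2 - 15)/y^7)))
      (nqf_f y * (1 - 105/y^8)) y := by
    intro y hy
    have hy0 : 0 < y := lt_of_lt_of_le hx hy
    have hnum : HasDerivAt (fun y : ℝ => y^6 - y^4 + 3*y^2 - 15)
        (6*y^5 - 4*y^3 + 6*y) y := by
      have := (((hasDerivAt_pow 6 y).sub (hasDerivAt_pow 4 y)).add
        ((hasDerivAt_pow 2 y).const_mul 3)).sub_const 15
      refine this.congr_deriv ?_
      push_cast; ring
    have hden : HasDerivAt (fun y : ℝ => y^7) (7*y^6) y := by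
      have := hasDerivAt_pow 7 y
      exact this.congr_deriv (by norm_num)
    have hg := hnum.div hden (pow_ne_zero _ (ne_of_gt hy0))
    have hA := ((nqf_f_hasDeriv y).mul hg).neg
    refine hA.congr_deriv ?_
    simp only [Pi.div_apply]
    field_simp
    ring
  have htend : Tendsto (fun y => -(nqf_f y * ((y^6 - y^4 + 3*y^2 - 15)/y^7)))
      atTop (nhds 0) := by
    have := ((nqf_f_tendsto.mul nqf_g4_tendsto).neg)
    simpa using this
  have hint : IntegrableOn (fun y => nqf_f y * (1 - 105/y^8)) (Set.Ioi x) := by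
    have := nqf_integrableOn_aux x hx 1 (-105) 8 (by norm_num)
    simpa [sub_eq_add_neg, neg_div] using this
  have key := integral_Ioi_of_hasDerivAt_of_tendsto' hderiv hint htend
  rw [key]; ring

lemma nqf_G_eq (x : ℝ) :
    1 - (∫ y in Set.Iic x, nqf_f y) = ∫ y in Set.Ioi x, nqf_f y := by
  have h := intervalIntegral.integral_Iic_add_Ioi (b := x) (nqf_f_integrable.integrableOn)
    (nqf_f_integrable.integrableOn)
  have htot : ∫ y, nqf_f y = 1 := by
    have h1 : ∫ x, Real.exp (-(1/2) * x ^ 2) = Real.sqrt (Real.pi / (1/2)) :=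
      integral_gaussian (1/2)
    have h2 : ∫ x, nqf_f x = (∫ x, Real.exp (-(1/2) * x ^ 2)) / Real.sqrt (2 * Real.pi) := by
      unfold nqf_f
      rw [integral_div]
      congr 1; apply integral_congr_ae; filter_upwards with x; ring_nf
    rw [h2, h1, show Real.pi / (1/2) = 2 * Real.pi by ring, div_self (by positivity)]
  rw [htot] at h
  linarith

lemma nqf_G_upper (x : ℝ) (hx : 0 < x) :
    (∫ y in Set.Ioi x, nqf_f y) ≤ nqf_f x * ((x^4 - x^2 + 3)/x^5) := by
  rw [← nqf_upper_int x hx]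
  apply setIntegral_mono_on (nqf_f_integrable.integrableOn)
    (nqf_integrableOn_aux x hx 1 15 6 (by norm_num)) measurableSet_Ioi
  intro y hy
  have hy0 : 0 < y := lt_trans hx hy
  nlinarith [nqf_f_pos y, pow_pos hy0 6, div_pos (by norm_num : (0:ℝ) < 15) (pow_pos hy0 6),
    mul_pos (nqf_f_pos y) (div_pos (by norm_num : (0:ℝ) < 15) (pow_pos hy0 6))]

lemma nqf_G_lower (x : ℝ) (hx : 0 < x) :
    nqf_f x * ((x^6 - x^4 + 3*x^2 - 15)/x^7) ≤ ∫ y in Set.Ioi x, nqf_f y := by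
  rw [← nqf_lower_int x hx]
  have hint : IntegrableOn (fun y => nqf_f y * (1 - 105/y^8)) (Set.Ioi x) := by
    have := nqf_integrableOn_aux x hx 1 (-105) 8 (by norm_num)
    simpa [sub_eq_add_neg, neg_div] using this
  apply setIntegral_mono_on hint (nqf_f_integrable.integrableOn) measurableSet_Ioi
  intro y hy
  have hy0 : 0 < y := lt_trans hx hy
  nlinarith [nqf_f_pos y, div_pos (by norm_num : (0:ℝ) < 105) (pow_pos hy0 8),
    mul_pos (nqf_f_pos y) (div_pos (by norm_num : (0:ℝ) < 105) (pow_pos hy0 8))]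

lemma nqf_q_le (x : ℝ) (hx : 0 < x) :
    x^4 * (x * (∫ y in Set.Ioi x, nqf_f y) / nqf_f x - 1 + (x⁻¹)^2) ≤ 3 := by
  have hG := nqf_G_upper x hx
  have hf := nqf_f_pos x
  have key : x * (∫ y in Set.Ioi x, nqf_f y) / nqf_f x ≤ (x^4 - x^2 + 3)/x^4 := by
    rw [div_le_div_iff₀ hf (pow_pos hx 4)]
    have hG' := mul_le_mul_of_nonneg_right hG (le_of_lt (pow_pos hx 5))
    rw [mul_assoc, div_mul_cancel₀ _ (ne_of_gt (pow_pos hx 5))] at hG'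
    nlinarith [pow_pos hx 4, pow_pos hx 5]
  have h2 := mul_le_mul_of_nonneg_left
    (add_le_add_left (sub_le_sub_right key 1) ((x⁻¹)^2)) (le_of_lt (pow_pos hx 4))
  calc x^4 * (x * (∫ y in Set.Ioi x, nqf_f y) / nqf_f x - 1 + (x⁻¹)^2)
      ≤ x^4 * ((x^4 - x^2 + 3)/x^4 - 1 + (x⁻¹)^2) := h2
    _ = 3 := by field_simp; ring

lemma nqf_q_ge (x : ℝ) (hx : 0 < x) :
    3 - 15*(x⁻¹)^2 ≤ x^4 * (x * (∫ y in Set.Ioi x, nqf_f y) / nqf_f x - 1 + (x⁻¹)^2) := by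
  have hG := nqf_G_lower x hx
  have hf := nqf_f_pos x
  have key : (x^6 - x^4 + 3*x^2 - 15)/x^6 ≤ x * (∫ y in Set.Ioi x, nqf_f y) / nqf_f x := by
    rw [div_le_div_iff₀ (pow_pos hx 6) hf]
    have hG' := mul_le_mul_of_nonneg_right hG (le_of_lt (pow_pos hx 7))
    rw [mul_assoc, div_mul_cancel₀ _ (ne_of_gt (pow_pos hx 7))] at hG'
    nlinarith [pow_pos hx 6, pow_pos hx 7]
  have h2 := mul_le_mul_of_nonneg_left
    (add_le_add_left (sub_le_sub_right key 1) ((x⁻¹)^2)) (le_of_lt (pow_pos hx 4))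
  calc 3 - 15*(x⁻¹)^2
      = x^4 * ((x^6 - x^4 + 3*x^2 - 15)/x^6 - 1 + (x⁻¹)^2) := by field_simp; ring
    _ ≤ _ := h2

lemma nqf_q_tendsto :
    Tendsto (fun x => x^4 * (x * (∫ y in Set.Ioi x, nqf_f y) / nqf_f x - 1 + (x⁻¹)^2))
      atTop (nhds 3) := by
  apply tendsto_of_tendsto_of_tendsto_of_le_of_le'
    (g := fun x : ℝ => 3 - 15*(x⁻¹)^2) (h := fun _ : ℝ => (3:ℝ))
  · have h := nqf_inv_tendsto
    have := (tendsto_const_nhds (x := (3:ℝ)) (f := atTop)).sub ((h.pow 2).const_mul 15)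
    simpa using this
  · exact tendsto_const_nhds
  · filter_upwards [eventually_gt_atTop 0] with x hx using nqf_q_ge x hx
  · filter_upwards [eventually_gt_atTop 0] with x hx using nqf_q_le x hx

lemma nqf_G_pos (x : ℝ) (hx : 2 ≤ x) : 0 < ∫ y in Set.Ioi x, nqf_f y := by
  have hx0 : (0:ℝ) < x := by linarith
  have hG := nqf_G_lower x hx0
  have hf := nqf_f_pos x
  have hnum : 0 < x^6 - x^4 + 3*x^2 - 15 := by
    have h2 : 4 ≤ x^2 := by nlinarith
    have h4 : 4*x^2 ≤ x^4 := by nlinarith [mul_le_mul_of_nonneg_left h2 (sq_nonneg x)]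
    have h6 : 4*x^4 ≤ x^6 := by nlinarith [mul_le_mul_of_nonneg_left h2 (pow_nonneg hx0.le 4)]
    nlinarith
  have := mul_pos hf (div_pos hnum (pow_pos hx0 7))
  linarith


lemma nqf_D_tendsto (q : ℝ → ℝ) (hq : Tendsto q atTop (nhds 3)) :
    Tendsto (fun x => q x + (q x * (x⁻¹)^2 - 1) * (1 - (x⁻¹)^2 + q x * (x⁻¹)^4 + 1))
      atTop (nhds 1) := by
  have hinv : Tendsto (fun x : ℝ => x⁻¹) atTop (nhds 0) := nqf_inv_tendsto
  have := hq.add (((hq.mul (hinv.pow 2)).sub (tendsto_const_nhds (x := (1:ℝ)))).mul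
    ((((tendsto_const_nhds (x := (1:ℝ))).sub (hinv.pow 2)).add
      (hq.mul (hinv.pow 4))).add (tendsto_const_nhds (x := (1:ℝ)))))
  convert this using 2
  norm_num

lemma nqf_T_tendsto (q : ℝ → ℝ) (hq : Tendsto q atTop (nhds 3)) :
    Tendsto (fun x => (1 - (x⁻¹)^2 + q x * (x⁻¹)^4) * (q x + q x * (x⁻¹)^2 - 1) /
      (q x + (q x * (x⁻¹)^2 - 1) * (1 - (x⁻¹)^2 + q x * (x⁻¹)^4 + 1))) atTop (nhds 2) := by
  have hinv : Tendsto (fun x : ℝ => x⁻¹) atTop (nhds 0) := nqf_inv_tendsto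
  have ha := ((tendsto_const_nhds (x := (1:ℝ)) (f := atTop)).sub (hinv.pow 2)).add
    (hq.mul (hinv.pow 4))
  have hb := (hq.add (hq.mul (hinv.pow 2))).sub (tendsto_const_nhds (x := (1:ℝ)))
  have := (ha.mul hb).div (nqf_D_tendsto q hq) (by norm_num)
  convert this using 2
  all_goals norm_num

/-- For the standard normal distribution, as `x → ∞`,
`h(x)ᵀ Γ_{F(x)}⁻¹ h(x) · (1 - F(x)) → 2`; that is,
`h(x)ᵀ Γ_{F(x)}⁻¹ h(x) ~ 2(1-F(x))⁻¹`. -/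
theorem normal_quadratic_form_asymptotics (f F μ : ℝ → ℝ) (h : ℝ → Fin 2 → ℝ)
    (Γ : ℝ → Matrix (Fin 2) (Fin 2) ℝ)
    (hf : ∀ x, f x = Real.exp (-x ^ 2 / 2) / Real.sqrt (2 * Real.pi))
    (hF : ∀ x, F x = ∫ y in Set.Iic x, f y)
    (hμ : ∀ x, μ x = f x / (1 - F x))
    (hh : ∀ x, h x = ![1, x])
    (hΓ : ∀ x, Γ x = (1 - F x) • !![1, μ x; μ x, x * μ x + 1]) :
    Tendsto (fun x => (h x ⬝ᵥ ((Γ x)⁻¹ *ᵥ h x)) * (1 - F x)) atTop (nhds 2) := by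
  have hfeq : f = nqf_f := funext fun x => hf x
  have hGeq : ∀ x, 1 - F x = ∫ y in Set.Ioi x, nqf_f y := by
    intro x
    rw [hF x, hfeq]
    exact nqf_G_eq x
  have hq3 : Tendsto (fun x => x^4 * (x * (1 - F x) / f x - 1 + (x⁻¹)^2)) atTop (nhds 3) := by
    apply nqf_q_tendsto.congr
    intro x
    rw [hGeq, hfeq]
  have hT := nqf_T_tendsto _ hq3
  have hDev := (nqf_D_tendsto _ hq3).eventually_ne one_ne_zero
  apply hT.congr'
  filter_upwards [eventually_ge_atTop 2, hDev] with x hx2 hDne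
  have hx0 : (0:ℝ) < x := by linarith
  have hxne : x ≠ 0 := ne_of_gt hx0
  have hg0 : 0 < 1 - F x := by rw [hGeq x]; exact nqf_G_pos x hx2
  have hgne : 1 - F x ≠ 0 := ne_of_gt hg0
  have hf0 : 0 < f x := by rw [hfeq]; exact nqf_f_pos x
  have hfne : f x ≠ 0 := ne_of_gt hf0
  have hM : Γ x = !![1 - F x, f x; f x, x * f x + (1 - F x)] := by
    rw [hΓ x, hμ x]
    ext i j
    fin_cases i <;> fin_cases j <;>
      simp [Matrix.smul_apply] <;> field_simp <;> ring
  have hdet : (Γ x).det = x * f x * (1 - F x) + (1 - F x)^2 - f x^2 := by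
    rw [hM, Matrix.det_fin_two_of]
    ring
  have hDeq : (fun x => x^4 * (x * (1 - F x) / f x - 1 + (x⁻¹)^2)) x +
      ((fun x => x^4 * (x * (1 - F x) / f x - 1 + (x⁻¹)^2)) x * (x⁻¹)^2 - 1) *
        (1 - (x⁻¹)^2 + (fun x => x^4 * (x * (1 - F x) / f x - 1 + (x⁻¹)^2)) x * (x⁻¹)^4 + 1)
      = x^4 * (x * f x * (1 - F x) + (1 - F x)^2 - f x^2) / (f x)^2 := by
    simp only
    field_simp
    ring
  have hD0ne : x * f x * (1 - F x) + (1 - F x)^2 - f x^2 ≠ 0 := by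
    intro h0
    apply hDne
    rw [hDeq, h0]
    simp
  have hinvM : (Γ x)⁻¹ = (x * f x * (1 - F x) + (1 - F x)^2 - f x^2)⁻¹ •
      !![x * f x + (1 - F x), -(f x); -(f x), 1 - F x] := by
    rw [Matrix.inv_def, hdet, Ring.inverse_eq_inv]
    congr 1
    rw [hM, Matrix.adjugate_fin_two_of]
  rw [hinvM, hh x]
  simp only [Matrix.smul_mulVec, dotProduct_smul, smul_eq_mul]
  rw [show (!![x * f x + (1 - F x), -(f x); -(f x), 1 - F x] *ᵥ ![1, x]) =
    ![(x * f x + (1 - F x)) * 1 + -(f x) * x, -(f x) * 1 + (1 - F x) * x] by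
      funext i
      fin_cases i <;>
        simp [Matrix.mulVec, dotProduct, Fin.sum_univ_two]]
  rw [show (![1, x] ⬝ᵥ ![(x * f x + (1 - F x)) * 1 + -(f x) * x, -(f x) * 1 + (1 - F x) * x])
    = 1 * ((x * f x + (1 - F x)) * 1 + -(f x) * x) + x * (-(f x) * 1 + (1 - F x) * x) by
      simp [dotProduct, Fin.sum_univ_two]]
  rw [hDeq]
  field_simp
  ring
end

section
/- For Student's t-distribution with k ≥ 1 degrees of freedom, 1 - F(x) ~ (d_k/k) x^{-k} as x → ∞, where d_k = Γ((k+1)/2) k^{k/2} / (√π Γ(k/2)). -/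
open MeasureTheory Filter Real Set Topology

lemma st_integrable {p : ℝ} (hp : 1 ≤ p) :
    Integrable (fun x : ℝ => (1 + x ^ 2) ^ (-p)) := by
  have hc : Continuous (fun x : ℝ => (1 + x ^ 2) ^ (-p)) := by
    apply (continuous_const.add (continuous_pow 2)).rpow_const
    intro x; left; exact ne_of_gt (by positivity : (0:ℝ) < 1 + x ^ 2)
  refine integrable_inv_one_add_sq.mono hc.aestronglyMeasurable ?_
  filter_upwards with x
  have h1 : (1:ℝ) ≤ 1 + x ^ 2 := by nlinarith [sq_nonneg x]
  have h2 : (0:ℝ) < 1 + x ^ 2 := by positivity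
  rw [Real.norm_eq_abs, Real.norm_eq_abs, abs_of_nonneg (rpow_nonneg h2.le _),
    abs_of_nonneg (inv_nonneg.2 h2.le)]
  calc (1 + x ^ 2) ^ (-p) ≤ (1 + x ^ 2) ^ (-1 : ℝ) :=
        rpow_le_rpow_of_exponent_le h1 (by linarith)
    _ = (1 + x ^ 2)⁻¹ := rpow_neg_one _

lemma st_hasDerivAt (q x : ℝ) :
    HasDerivAt (fun x : ℝ => x * (1 + x ^ 2) ^ (-q))
      ((1 + x ^ 2) ^ (-q) - 2 * q * x ^ 2 * (1 + x ^ 2) ^ (-q - 1)) x := by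
  have hu : HasDerivAt (fun x : ℝ => 1 + x ^ 2) (2 * x) x := by
    simpa using (hasDerivAt_pow 2 x).const_add 1
  have h2 : HasDerivAt (fun x : ℝ => (1 + x ^ 2) ^ (-q))
      (2 * x * (-q) * (1 + x ^ 2) ^ (-q - 1)) x := by
    have := hu.rpow_const (p := -q) (Or.inl (by positivity))
    convert this using 1
  have := (hasDerivAt_id x).fun_mul h2
  refine this.congr_deriv ?_
  simp [id]; ring

lemma st_key (q x : ℝ) :
    x ^ 2 * (1 + x ^ 2) ^ (-q - 1) = (1 + x ^ 2) ^ (-q) - (1 + x ^ 2) ^ (-q - 1) := by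
  have h2 : (0:ℝ) < 1 + x ^ 2 := by positivity
  have h3 : (1 + x ^ 2) * (1 + x ^ 2) ^ (-q - 1) = (1 + x ^ 2) ^ (-q) := by
    rw [show (-q : ℝ) - 1 = -q + -1 by ring, rpow_add h2, rpow_neg_one]
    field_simp
  nlinarith [h3]

lemma st_bnd {q : ℝ} (hq : 1 ≤ q) {x : ℝ} (hx : 1 ≤ |x|) :
    ‖x * (1 + x ^ 2) ^ (-q)‖ ≤ |x|⁻¹ := by
  have h2 : (0:ℝ) < 1 + x ^ 2 := by positivity
  have h1 : (1:ℝ) ≤ 1 + x ^ 2 := by nlinarith [sq_nonneg x]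
  have hx1 : (1:ℝ) ≤ x ^ 2 := by nlinarith [sq_abs x, abs_nonneg x]
  have hx2 : (0:ℝ) < x ^ 2 := by linarith
  rw [norm_mul, Real.norm_eq_abs, Real.norm_eq_abs,
    abs_of_nonneg (rpow_nonneg h2.le _)]
  calc |x| * (1 + x ^ 2) ^ (-q) ≤ |x| * (1 + x ^ 2) ^ (-1 : ℝ) := by
        exact mul_le_mul_of_nonneg_left
          (rpow_le_rpow_of_exponent_le h1 (by linarith)) (abs_nonneg x)
    _ = |x| * (1 + x ^ 2)⁻¹ := by rw [rpow_neg_one]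
    _ ≤ |x| * (x ^ 2)⁻¹ := by
        exact mul_le_mul_of_nonneg_left (by
          exact inv_anti₀ hx2 (by nlinarith)) (abs_nonneg x)
    _ = |x|⁻¹ := by
        rw [← sq_abs]
        field_simp

lemma st_tendsto_top {q : ℝ} (hq : 1 ≤ q) :
    Tendsto (fun x : ℝ => x * (1 + x ^ 2) ^ (-q)) atTop (𝓝 0) := by
  apply squeeze_zero_norm' (a := fun x : ℝ => |x|⁻¹)
  · filter_upwards [eventually_ge_atTop (1:ℝ)] with x hx
    exact st_bnd hq (by rw [abs_of_nonneg (by linarith)]; exact hx)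
  · exact tendsto_inv_atTop_zero.comp tendsto_abs_atTop_atTop

lemma st_tendsto_bot {q : ℝ} (hq : 1 ≤ q) :
    Tendsto (fun x : ℝ => x * (1 + x ^ 2) ^ (-q)) atBot (𝓝 0) := by
  apply squeeze_zero_norm' (a := fun x : ℝ => |x|⁻¹)
  · filter_upwards [eventually_le_atBot (-1:ℝ)] with x hx
    exact st_bnd hq (by rw [abs_of_nonpos (by linarith)]; linarith)
  · exact tendsto_inv_atTop_zero.comp tendsto_abs_atBot_atTop

lemma st_rec {s : ℝ} (hs : 1 ≤ s) :
    ∫ x : ℝ, (1 + x ^ 2) ^ (-((s + 1) / 2) - 1) =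
      s / (s + 1) * ∫ x : ℝ, (1 + x ^ 2) ^ (-((s + 1) / 2)) := by
  have hq1 : 1 ≤ (s + 1) / 2 := by linarith
  have hq2 : 1 ≤ (s + 1) / 2 + 1 := by linarith
  have hd : ∀ x : ℝ, HasDerivAt (fun x : ℝ => x * (1 + x ^ 2) ^ (-((s + 1) / 2)))
      ((s + 1) * (1 + x ^ 2) ^ (-((s + 1) / 2) - 1)
        - s * (1 + x ^ 2) ^ (-((s + 1) / 2))) x := by
    intro x
    have h := st_key ((s + 1) / 2) x
    convert st_hasDerivAt ((s + 1) / 2) x using 1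
    linear_combination (s + 1) * h
  have hi1 : Integrable (fun x : ℝ => (1 + x ^ 2) ^ (-((s + 1) / 2) - 1)) := by
    have := st_integrable hq2
    rw [show -((s + 1) / 2 + 1) = -((s + 1) / 2) - 1 by ring] at this
    exact this
  have hi0 : Integrable (fun x : ℝ => (1 + x ^ 2) ^ (-((s + 1) / 2))) :=
    st_integrable hq1
  have hint : Integrable (fun x : ℝ =>
      (s + 1) * (1 + x ^ 2) ^ (-((s + 1) / 2) - 1)
        - s * (1 + x ^ 2) ^ (-((s + 1) / 2))) :=
    (hi1.const_mul _).sub (hi0.const_mul _)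
  have h0 := integral_of_hasDerivAt_of_tendsto hd hint
    (st_tendsto_bot hq1) (st_tendsto_top hq1)
  rw [integral_sub (hi1.const_mul _) (hi0.const_mul _),
    MeasureTheory.integral_const_mul, MeasureTheory.integral_const_mul] at h0
  have hs1 : s + 1 ≠ 0 := by linarith
  rw [div_mul_eq_mul_div, eq_div_iff hs1]
  linarith [h0]

lemma st_scale {x A : ℝ} (hx : 0 < x) (hA : 0 < A) (p : ℝ) :
    x ^ (2 * p) * A ^ (-p) = (A / x ^ 2) ^ (-p) := by
  have hxp : (0:ℝ) < x ^ (2 * p) := rpow_pos_of_pos hx _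
  rw [Real.div_rpow hA.le (sq_nonneg x), ← Real.rpow_natCast x 2, ← Real.rpow_mul hx.le,
    show ((2:ℕ):ℝ) * -p = -(2 * p) by push_cast; ring, Real.rpow_neg hx.le,
    eq_div_iff (by positivity)]
  field_simp [mul_comm]

lemma st_g1_top : Tendsto (fun x : ℝ => x * (1 + x ^ 2) ^ (-(1/2) : ℝ)) atTop (𝓝 1) := by
  have h0 : Tendsto (fun x : ℝ => x⁻¹ ^ 2 + 1) atTop (𝓝 1) := by
    have := ((tendsto_inv_atTop_zero (𝕜 := ℝ)).pow 2).add_const 1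
    simpa using this
  have h : Tendsto (fun x : ℝ => (x⁻¹ ^ 2 + 1) ^ (-(1/2) : ℝ)) atTop (𝓝 1) := by
    have := h0.rpow_const (p := -(1/2)) (Or.inl one_ne_zero)
    simpa using this
  apply h.congr'
  filter_upwards [eventually_gt_atTop (0:ℝ)] with x hx
  have hA : (0:ℝ) < 1 + x ^ 2 := by positivity
  have hsc := st_scale hx hA (1/2)
  rw [show (2:ℝ) * (1/2) = 1 by norm_num, rpow_one] at hsc
  rw [hsc]
  congr 1
  field_simp

lemma st_g1_bot : Tendsto (fun x : ℝ => x * (1 + x ^ 2) ^ (-(1/2) : ℝ)) atBot (𝓝 (-1)) := by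
  have h := (st_g1_top.comp tendsto_neg_atBot_atTop).neg
  simp only [Function.comp] at h
  apply h.congr
  intro x
  simp [neg_sq]

lemma st_base1 : ∫ x : ℝ, (1 + x ^ 2) ^ (-1 : ℝ) = π := by
  simp_rw [rpow_neg_one]
  exact integral_univ_inv_one_add_sq

lemma st_base2 : ∫ x : ℝ, (1 + x ^ 2) ^ (-(3/2) : ℝ) = 2 := by
  have hd : ∀ x : ℝ, HasDerivAt (fun x : ℝ => x * (1 + x ^ 2) ^ (-(1/2) : ℝ))
      ((1 + x ^ 2) ^ (-(3/2) : ℝ)) x := by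
    intro x
    have hk := st_key (1/2) x
    rw [show (-(1/2) : ℝ) - 1 = -(3/2) by norm_num] at hk
    have h := st_hasDerivAt (1/2) x
    rw [show (-(1/2) : ℝ) - 1 = -(3/2) by norm_num] at h
    convert h using 1
    linear_combination hk
  have hi : Integrable (fun x : ℝ => (1 + x ^ 2) ^ (-(3/2) : ℝ)) := by
    have := st_integrable (p := 3/2) (by norm_num)
    simpa using this
  rw [integral_of_hasDerivAt_of_tendsto hd hi st_g1_bot st_g1_top]
  norm_num

lemma st_Bval : ∀ k : ℕ, 1 ≤ k →
    ∫ x : ℝ, (1 + x ^ 2) ^ (-(((k:ℝ) + 1) / 2)) =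
      Real.sqrt π * Real.Gamma ((k:ℝ) / 2) / Real.Gamma (((k:ℝ) + 1) / 2) := by
  intro k
  induction k using Nat.strong_induction_on with
  | _ k IH =>
    intro hk
    rcases Nat.lt_or_ge k 3 with h3 | h3
    · interval_cases k
      · rw [show -((((1:ℕ):ℝ) + 1) / 2) = (-1 : ℝ) by norm_num, st_base1,
          show (((1:ℕ):ℝ)) / 2 = (1/2 : ℝ) by norm_num,
          show ((((1:ℕ):ℝ)) + 1) / 2 = (1 : ℝ) by norm_num,
          Real.Gamma_one_half_eq, Real.Gamma_one, div_one]
        exact (Real.mul_self_sqrt pi_pos.le).symm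
      · rw [show -((((2:ℕ):ℝ) + 1) / 2) = (-(3/2) : ℝ) by norm_num, st_base2,
          show (((2:ℕ):ℝ)) / 2 = (1 : ℝ) by norm_num,
          show ((((2:ℕ):ℝ)) + 1) / 2 = ((1/2 : ℝ) + 1) by norm_num,
          Real.Gamma_one, Real.Gamma_add_one (by norm_num), Real.Gamma_one_half_eq, mul_one]
        have hs : (0:ℝ) < Real.sqrt π := Real.sqrt_pos.mpr pi_pos
        field_simp
    · obtain ⟨m, rfl⟩ : ∃ m, k = m + 2 := ⟨k - 2, by omega⟩
      have hm1 : 1 ≤ m := by omega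
      have ihm := IH m (by omega) hm1
      have hm0 : (0:ℝ) < (m:ℝ) := by exact_mod_cast Nat.pos_of_ne_zero (by omega)
      rw [show (((m + 2 : ℕ)):ℝ) = (m:ℝ) + 2 by push_cast; ring]
      rw [show -(((m:ℝ) + 2 + 1) / 2) = -(((m:ℝ) + 1) / 2) - 1 by ring]
      rw [st_rec (by exact_mod_cast hm1), ihm]
      have h1 : Real.Gamma (((m:ℝ) + 2) / 2) = ((m:ℝ) / 2) * Real.Gamma ((m:ℝ) / 2) := by
        rw [show ((m:ℝ) + 2) / 2 = (m:ℝ) / 2 + 1 by ring,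
          Real.Gamma_add_one (by positivity)]
      have h2 : Real.Gamma (((m:ℝ) + 2 + 1) / 2)
          = (((m:ℝ) + 1) / 2) * Real.Gamma (((m:ℝ) + 1) / 2) := by
        rw [show ((m:ℝ) + 2 + 1) / 2 = ((m:ℝ) + 1) / 2 + 1 by ring,
          Real.Gamma_add_one (by positivity)]
      rw [h1, h2]
      have g1 : 0 < Real.Gamma ((m:ℝ) / 2) := Real.Gamma_pos_of_pos (by positivity)
      have g2 : 0 < Real.Gamma (((m:ℝ) + 1) / 2) := Real.Gamma_pos_of_pos (by positivity)
      have hm2 : ((m:ℝ) + 1) ≠ 0 := by positivity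
      field_simp

/-- For Student's t-distribution with `k ≥ 1` degrees of freedom,
`1 - F(x) ~ (d_k/k) x^{-k}` as `x → ∞`, where
`d_k = Γ((k+1)/2) k^{k/2} / (√π Γ(k/2))`, in the sense that
`x^k (1 - F(x)) → d_k / k`. -/
theorem student_t_tail (k : ℕ) (hk : 1 ≤ k) (f F : ℝ → ℝ) (d : ℝ)
    (hf : ∀ x, f x = (1 / Real.sqrt (Real.pi * k)) *
      (Real.Gamma ((k + 1) / 2) / Real.Gamma (k / 2)) *
      (1 + x ^ 2 / k) ^ (-(((k : ℝ) + 1) / 2)))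
    (hF : ∀ x, F x = ∫ y in Set.Iic x, f y)
    (hd : d = Real.Gamma ((k + 1) / 2) * (k : ℝ) ^ ((k : ℝ) / 2) /
      (Real.sqrt Real.pi * Real.Gamma (k / 2))) :
    Tendsto (fun x => x ^ k * (1 - F x)) atTop (nhds (d / k)) := by
  have hk0 : (0:ℝ) < k := by exact_mod_cast Nat.pos_of_ne_zero (by omega)
  have hkR : (1:ℝ) ≤ k := by exact_mod_cast hk
  set s : ℝ := ((k:ℝ) + 1) / 2 with hs_def
  have hs1 : 1 ≤ s := by rw [hs_def]; linarith
  set c : ℝ := (1 / Real.sqrt (Real.pi * k)) *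
      (Real.Gamma (((k:ℝ) + 1) / 2) / Real.Gamma ((k:ℝ) / 2)) with hc_def
  have g1 : 0 < Real.Gamma ((k:ℝ) / 2) := Real.Gamma_pos_of_pos (by positivity)
  have g2 : 0 < Real.Gamma (((k:ℝ) + 1) / 2) := Real.Gamma_pos_of_pos (by positivity)
  have hsqpi : 0 < Real.sqrt π := Real.sqrt_pos.mpr pi_pos
  have hsqpik : 0 < Real.sqrt (π * k) := Real.sqrt_pos.mpr (by positivity)
  have hc : 0 < c := by rw [hc_def]; positivity
  -- f in terms of the standard integrand
  have hfe : ∀ y : ℝ, f y = c * (1 + ((Real.sqrt k)⁻¹ * y) ^ 2) ^ (-s) := by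
    intro y
    rw [hf y]
    congr 2
    rw [mul_pow, inv_pow, Real.sq_sqrt hk0.le]
    ring
  -- integrability of f
  have hgi : Integrable (fun u : ℝ => (1 + u ^ 2) ^ (-s)) := st_integrable hs1
  have hfi : Integrable f := by
    rw [show f = fun y => c * (1 + ((Real.sqrt k)⁻¹ * y) ^ 2) ^ (-s) from funext hfe]
    apply Integrable.const_mul
    exact (integrable_comp_mul_left_iff (fun u : ℝ => (1 + u ^ 2) ^ (-s))
      (inv_ne_zero (Real.sqrt_pos.mpr hk0).ne')).mpr hgi
  -- normalization
  have hN : ∫ y : ℝ, f y = 1 := by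
    have h1 : ∫ y : ℝ, f y = c * ∫ y : ℝ, (1 + ((Real.sqrt k)⁻¹ * y) ^ 2) ^ (-s) := by
      simp_rw [hfe]
      rw [MeasureTheory.integral_const_mul]
    have h2 : (∫ y : ℝ, (1 + ((Real.sqrt k)⁻¹ * y) ^ 2) ^ (-s))
        = |Real.sqrt (k:ℝ)| • ∫ u : ℝ, (1 + u ^ 2) ^ (-s) := by
      exact Measure.integral_comp_inv_mul_left
        (fun u : ℝ => (1 + u ^ 2) ^ (-s)) (Real.sqrt k)
    rw [h1, h2, st_Bval k hk, abs_of_pos (Real.sqrt_pos.mpr hk0), smul_eq_mul]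
    rw [hc_def, Real.sqrt_mul pi_pos.le]
    have hsk : 0 < Real.sqrt (k:ℝ) := Real.sqrt_pos.mpr hk0
    field_simp
  -- tail formula
  have hT : ∀ x : ℝ, 1 - F x = ∫ y in Ioi x, f y := by
    intro x
    have h := intervalIntegral.integral_Iic_add_Ioi (b := x) (μ := volume) hfi.integrableOn hfi.integrableOn
    rw [hN] at h
    rw [hF x]
    linarith
  -- key pointwise identity
  have hkey : ∀ x t : ℝ, 0 < x → 0 < t →
      x ^ (k + 1) * f (x * t) = c * ((x⁻¹) ^ 2 + t ^ 2 / k) ^ (-s) := by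
    intro x t hx ht
    have hA : (0:ℝ) < 1 + (x * t) ^ 2 / k := by positivity
    have h2 : (x:ℝ) ^ (k + 1) = x ^ (2 * s) := by
      rw [← Real.rpow_natCast x (k + 1)]
      congr 1
      rw [hs_def]; push_cast; ring
    rw [hf (x * t), h2]
    calc x ^ (2 * s) * (c * (1 + (x * t) ^ 2 / k) ^ (-s))
        = c * (x ^ (2 * s) * (1 + (x * t) ^ 2 / k) ^ (-s)) := by ring
      _ = c * (((1 + (x * t) ^ 2 / k) / x ^ 2) ^ (-s)) := by rw [st_scale hx hA s]
      _ = c * ((x⁻¹ ^ 2 + t ^ 2 / k) ^ (-s)) := by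
          congr 2
          field_simp
  -- conversion for the limit/bound function
  have hconv : ∀ t : ℝ, 0 < t → (t ^ 2 / (k:ℝ)) ^ (-s) = (k:ℝ) ^ s * t ^ (-((k:ℝ) + 1)) := by
    intro t ht
    rw [Real.div_rpow (sq_nonneg t) (le_of_lt hk0), Real.rpow_neg hk0.le]
    rw [← Real.rpow_natCast t 2, ← Real.rpow_mul ht.le,
      show ((2:ℕ):ℝ) * -s = -((k:ℝ) + 1) by rw [hs_def]; push_cast; ring]
    simp [division_def, mul_comm]
  -- substitution y = x t
  have hsub : ∀ x : ℝ, 0 < x →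
      x ^ k * (1 - F x) = ∫ t in Ioi (1:ℝ), x ^ (k + 1) * f (x * t) := by
    intro x hx
    rw [hT x]
    have h1 : (∫ t in Ioi (1:ℝ), f (x * t)) = x⁻¹ • ∫ y in Ioi (x * 1), f y :=
      integral_comp_mul_left_Ioi f 1 hx
    rw [mul_one, smul_eq_mul] at h1
    rw [MeasureTheory.integral_const_mul, h1, ← mul_assoc]
    have h2 : (x:ℝ) ^ (k + 1) * x⁻¹ = x ^ k := by
      rw [pow_succ]; field_simp
    rw [h2]
  -- limit / dominating function
  set L : ℝ → ℝ := fun t => c * ((k:ℝ) ^ s * t ^ (-((k:ℝ) + 1))) with hL_def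
  have hLint : IntegrableOn L (Ioi (1:ℝ)) := by
    exact ((integrableOn_Ioi_rpow_of_lt (by linarith) one_pos).const_mul _).const_mul _
  have hfc : Continuous f := by
    rw [show f = fun y => c * (1 + y ^ 2 / k) ^ (-s) from funext hf]
    exact continuous_const.mul ((continuous_const.add
      ((continuous_pow 2).div_const _)).rpow_const fun y => Or.inl (ne_of_gt (by positivity : (0:ℝ) < 1 + y ^ 2 / k)))
  have hmeas : ∀ᶠ x : ℝ in atTop,
      AEStronglyMeasurable (fun t : ℝ => x ^ (k + 1) * f (x * t))
        (volume.restrict (Ioi 1)) := by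
    filter_upwards with x
    exact ((continuous_const.mul
      (hfc.comp (continuous_const.mul continuous_id))).aestronglyMeasurable).restrict
  have hbound : ∀ᶠ x : ℝ in atTop, ∀ᵐ t ∂(volume.restrict (Ioi (1:ℝ))),
      ‖x ^ (k + 1) * f (x * t)‖ ≤ L t := by
    filter_upwards [eventually_ge_atTop (1:ℝ)] with x hx1
    rw [ae_restrict_iff' measurableSet_Ioi]
    filter_upwards with t ht
    have ht0 : (0:ℝ) < t := lt_trans one_pos ht
    have hx0 : (0:ℝ) < x := lt_of_lt_of_le one_pos hx1
    have hB : (0:ℝ) < x⁻¹ ^ 2 + t ^ 2 / k := by positivity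
    rw [hkey x t hx0 ht0, Real.norm_eq_abs,
      abs_of_nonneg (mul_nonneg hc.le (Real.rpow_nonneg hB.le _))]
    have hmono : (x⁻¹ ^ 2 + t ^ 2 / k) ^ (-s) ≤ (t ^ 2 / (k:ℝ)) ^ (-s) :=
      Real.rpow_le_rpow_of_nonpos (by positivity) (by nlinarith [sq_nonneg x⁻¹])
        (by simp [hs_def]; linarith)
    calc c * (x⁻¹ ^ 2 + t ^ 2 / k) ^ (-s) ≤ c * (t ^ 2 / (k:ℝ)) ^ (-s) :=
          mul_le_mul_of_nonneg_left hmono hc.le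
      _ = L t := by rw [hconv t ht0]
  have hlim : ∀ᵐ t ∂(volume.restrict (Ioi (1:ℝ))),
      Tendsto (fun x : ℝ => x ^ (k + 1) * f (x * t)) atTop (𝓝 (L t)) := by
    rw [ae_restrict_iff' measurableSet_Ioi]
    filter_upwards with t ht
    have ht0 : (0:ℝ) < t := lt_trans one_pos ht
    have h0 : Tendsto (fun x : ℝ => x⁻¹ ^ 2 + t ^ 2 / k) atTop (𝓝 (t ^ 2 / k)) := by
      have := ((tendsto_inv_atTop_zero (𝕜 := ℝ)).pow 2).add_const (t ^ 2 / (k:ℝ))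
      simpa using this
    have h1 := (h0.rpow_const (p := -s) (Or.inl (by positivity))).const_mul c
    rw [hconv t ht0] at h1
    apply h1.congr'
    filter_upwards [eventually_gt_atTop (0:ℝ)] with x hx0
    exact (hkey x t hx0 ht0).symm
  have hDCT := tendsto_integral_filter_of_dominated_convergence L hmeas hbound hLint hlim
  -- value of the limit integral
  have hcd : c * (k:ℝ) ^ s = d := by
    have hsk : Real.sqrt (k:ℝ) = (k:ℝ) ^ ((1:ℝ)/2) := Real.sqrt_eq_rpow _
    have hks : (k:ℝ) ^ s = (k:ℝ) ^ ((1:ℝ)/2) * (k:ℝ) ^ ((k:ℝ)/2) := by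
      rw [← Real.rpow_add hk0]; congr 1; rw [hs_def]; ring
    have h1 : ((k:ℝ) ^ ((1:ℝ)/2)) ≠ 0 := (Real.rpow_pos_of_pos hk0 _).ne'
    rw [hd, hc_def, Real.sqrt_mul pi_pos.le, hks, hsk]
    field_simp
    ring
  have hLval : ∫ t in Ioi (1:ℝ), L t = d / k := by
    have h1 : ∫ t in Ioi (1:ℝ), L t
        = (c * (k:ℝ) ^ s) * ∫ t in Ioi (1:ℝ), t ^ (-((k:ℝ) + 1)) := by
      simp_rw [hL_def, ← mul_assoc]
      rw [MeasureTheory.integral_const_mul]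
    rw [h1, integral_Ioi_rpow_of_lt (by linarith) one_pos, Real.one_rpow,
      show -((k:ℝ) + 1) + 1 = -(k:ℝ) by ring, neg_div_neg_eq, hcd, mul_one_div]
  rw [hLval] at hDCT
  apply hDCT.congr'
  filter_upwards [eventually_ge_atTop (1:ℝ)] with x hx1
  exact (hsub x (lt_of_lt_of_le one_pos hx1)).symm
end
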